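/- Let n = 2, t_1 = t_2 = 1, q_1 = 1/2, and q_2 = 15/16. Then the Hider strategy p' = (15/19, 4/19) is an optimal (max-min) Hider strategy: inf_ξ u(p',ξ) = sup_p inf_ξ u(p,ξ), where the supremum is over all mixed Hider strategies p and the infimum over all Searcher sequences ξ. -/
import Mathlib


open scoped ENNReal

/-- `looks ξ j k` = number of looks in box `j` among the first `k` looks of `ξ`. -/
def looks {n : ℕ} (ξ : ℕ → Fin n) (j : Fin n) (k : ℕ) : ℕ :=
  ((Finset.range k).filter (fun i => ξ i = j)).card

/-- Expected search time (in `[0,∞]`) to find a target hidden in box `j`, when the boxes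
have search times `t` and detection probabilities `q`, and the Searcher uses the
sequence `ξ`. -/
noncomputable def searchTime {n : ℕ} (t q : Fin n → ℝ) (j : Fin n) (ξ : ℕ → Fin n) : ℝ≥0∞ :=
  ∑' k : ℕ, ENNReal.ofReal (t (ξ k) * (1 - q j) ^ looks ξ j k)

/-- Expected search time against the mixed Hider strategy `p`. -/
noncomputable def mixedSearchTime {n : ℕ} (t q : Fin n → ℝ) (p : Fin n → ℝ)
    (ξ : ℕ → Fin n) : ℝ≥0∞ :=
  ∑ j : Fin n, ENNReal.ofReal (p j) * searchTime t q j ξ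

/- ### Auxiliary definitions and lemmas -/

/-- The greedy searcher sequence against `p' = (15/19, 4/19)`: look in box `1`
at steps `≡ 2 (mod 5)`, in box `0` otherwise. -/
def xiA : ℕ → Fin 2 := fun k => if k % 5 = 2 then 1 else 0

/-- A second optimal searcher sequence: box `1` at steps `≡ 1 (mod 5)`. -/
def xiB : ℕ → Fin 2 := fun k => if k % 5 = 1 then 1 else 0

lemma looks_succ {n : ℕ} (ξ : ℕ → Fin n) (j : Fin n) (k : ℕ) :
    looks ξ j (k+1) = looks ξ j k + (if ξ k = j then 1 else 0) := by
  simp only [looks, Finset.range_add_one, Finset.filter_insert]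
  split
  · rw [Finset.card_insert_of_notMem (by simp)]
  · simp

lemma looks_add (ξ : ℕ → Fin 2) (k : ℕ) : looks ξ 0 k + looks ξ 1 k = k := by
  induction k with
  | zero => simp [looks]
  | succ k ih =>
    rw [looks_succ, looks_succ]
    have : ξ k = 0 ∨ ξ k = 1 := by omega
    rcases this with h | h <;> simp [h] <;> omega

lemma looksA1 (k : ℕ) : looks xiA 1 k = (k+2)/5 := by
  induction k with
  | zero => simp [looks]
  | succ k ih =>
    rw [looks_succ, ih]
    by_cases h : k % 5 = 2
    · simp [xiA, h]; omega
    · have : xiA k = 0 := by simp [xiA, h]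
      simp [this]; omega

lemma looksA0 (k : ℕ) : looks xiA 0 k = k - (k+2)/5 := by
  have := looks_add xiA k; have := looksA1 k; omega

lemma looksB1 (k : ℕ) : looks xiB 1 k = (k+3)/5 := by
  induction k with
  | zero => simp [looks]
  | succ k ih =>
    rw [looks_succ, ih]
    by_cases h : k % 5 = 1
    · simp [xiB, h]; omega
    · have : xiB k = 0 := by simp [xiB, h]
      simp [this]; omega

lemma looksB0 (k : ℕ) : looks xiB 0 k = k - (k+3)/5 := by
  have := looks_add xiB k; have := looksB1 k; omega

lemma geom16 : (∑' m : ℕ, ENNReal.ofReal ((1/16 : ℝ)^m)) = ENNReal.ofReal (16/15) := by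
  rw [← ENNReal.ofReal_tsum_of_nonneg (fun n => by positivity)
      (summable_geometric_of_lt_one (by norm_num) (by norm_num))]
  rw [tsum_geometric_of_lt_one (by norm_num) (by norm_num)]
  norm_num

lemma tsum_period (f : ℕ → ℝ≥0∞) (g : Fin 5 → ℝ≥0∞)
    (h : ∀ (m : ℕ) (r : Fin 5), f (m * 5 + ↑r) = ENNReal.ofReal ((1/16 : ℝ)^m) * g r) :
    ∑' k, f k = (∑ r, g r) * ENNReal.ofReal (16/15) := by
  rw [← ((Nat.divModEquiv 5).symm.tsum_eq f)]
  have he : ∀ p : ℕ × Fin 5, (Nat.divModEquiv 5).symm p = p.1 * 5 + ↑p.2 := fun p => rfl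
  calc ∑' p : ℕ × Fin 5, f ((Nat.divModEquiv 5).symm p)
      = ∑' (m : ℕ) (r : Fin 5), ENNReal.ofReal ((1/16 : ℝ)^m) * g r := by
        rw [← ENNReal.tsum_prod]; exact tsum_congr fun p => by rw [he, h]
    _ = ∑' (m : ℕ), ENNReal.ofReal ((1/16 : ℝ)^m) * ∑ r, g r := by
        refine tsum_congr fun m => ?_
        rw [tsum_fintype, ← Finset.mul_sum]
    _ = (∑ r, g r) * ENNReal.ofReal (16/15) := by
        rw [ENNReal.tsum_mul_right, geom16, mul_comm]

lemma pow_half (a b : ℕ) : ((1/2 : ℝ))^(4*a+b) = (1/16)^a * (1/2)^b := by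
  rw [pow_add, pow_mul]; norm_num

lemma q0eq : (1 - (![1/2, 15/16] : Fin 2 → ℝ) 0) = 1/2 := by norm_num
lemma q1eq : (1 - (![1/2, 15/16] : Fin 2 → ℝ) 1) = 1/16 := by norm_num

lemma SA0 : searchTime (fun _ => 1) ![1/2, 15/16] 0 xiA = ENNReal.ofReal (34/15) := by
  unfold searchTime
  have key : ∀ (m : ℕ) (r : Fin 5),
      ENNReal.ofReal ((1 : ℝ) * (1 - (![1/2, 15/16] : Fin 2 → ℝ) 0) ^ looks xiA 0 (m * 5 + ↑r))
        = ENNReal.ofReal ((1/16 : ℝ)^m) *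
          ![ENNReal.ofReal ((1/2:ℝ)^0), ENNReal.ofReal ((1/2:ℝ)^1), ENNReal.ofReal ((1/2:ℝ)^2),
            ENNReal.ofReal ((1/2:ℝ)^2), ENNReal.ofReal ((1/2:ℝ)^3)] r := by
    intro m r
    rw [one_mul, looksA0, q0eq]
    fin_cases r
    · show ENNReal.ofReal ((1/2:ℝ) ^ (m * 5 + 0 - (m * 5 + 0 + 2)/5)) = _
      rw [show m * 5 + 0 - (m * 5 + 0 + 2)/5 = 4 * m + 0 from by omega, pow_half,
        ENNReal.ofReal_mul (by positivity)]; rfl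
    · show ENNReal.ofReal ((1/2:ℝ) ^ (m * 5 + 1 - (m * 5 + 1 + 2)/5)) = _
      rw [show m * 5 + 1 - (m * 5 + 1 + 2)/5 = 4 * m + 1 from by omega, pow_half,
        ENNReal.ofReal_mul (by positivity)]; rfl
    · show ENNReal.ofReal ((1/2:ℝ) ^ (m * 5 + 2 - (m * 5 + 2 + 2)/5)) = _
      rw [show m * 5 + 2 - (m * 5 + 2 + 2)/5 = 4 * m + 2 from by omega, pow_half,
        ENNReal.ofReal_mul (by positivity)]; rfl
    · show ENNReal.ofReal ((1/2:ℝ) ^ (m * 5 + 3 - (m * 5 + 3 + 2)/5)) = _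
      rw [show m * 5 + 3 - (m * 5 + 3 + 2)/5 = 4 * m + 2 from by omega, pow_half,
        ENNReal.ofReal_mul (by positivity)]; rfl
    · show ENNReal.ofReal ((1/2:ℝ) ^ (m * 5 + 4 - (m * 5 + 4 + 2)/5)) = _
      rw [show m * 5 + 4 - (m * 5 + 4 + 2)/5 = 4 * m + 3 from by omega, pow_half,
        ENNReal.ofReal_mul (by positivity)]; rfl
  rw [tsum_period _ _ key, Fin.sum_univ_five]
  simp only [Matrix.cons_val_zero, Matrix.cons_val_one, Matrix.head_cons,
    Matrix.cons_val_two, Matrix.tail_cons, Matrix.cons_val_three, Matrix.cons_val_four]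
  rw [← ENNReal.ofReal_add (by positivity) (by positivity),
      ← ENNReal.ofReal_add (by positivity) (by positivity),
      ← ENNReal.ofReal_add (by positivity) (by positivity),
      ← ENNReal.ofReal_add (by positivity) (by positivity),
      ← ENNReal.ofReal_mul (by positivity)]
  norm_num

lemma SA1 : searchTime (fun _ => 1) ![1/2, 15/16] 1 xiA = ENNReal.ofReal (10/3) := by
  unfold searchTime
  have key : ∀ (m : ℕ) (r : Fin 5),
      ENNReal.ofReal ((1 : ℝ) * (1 - (![1/2, 15/16] : Fin 2 → ℝ) 1) ^ looks xiA 1 (m * 5 + ↑r))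
        = ENNReal.ofReal ((1/16 : ℝ)^m) *
          ![ENNReal.ofReal ((1/16:ℝ)^0), ENNReal.ofReal ((1/16:ℝ)^0), ENNReal.ofReal ((1/16:ℝ)^0),
            ENNReal.ofReal ((1/16:ℝ)^1), ENNReal.ofReal ((1/16:ℝ)^1)] r := by
    intro m r
    rw [one_mul, looksA1, q1eq]
    fin_cases r
    · show ENNReal.ofReal ((1/16:ℝ) ^ ((m * 5 + 0 + 2)/5)) = _
      rw [show (m * 5 + 0 + 2)/5 = m + 0 from by omega, pow_add,
        ENNReal.ofReal_mul (by positivity)]; rfl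
    · show ENNReal.ofReal ((1/16:ℝ) ^ ((m * 5 + 1 + 2)/5)) = _
      rw [show (m * 5 + 1 + 2)/5 = m + 0 from by omega, pow_add,
        ENNReal.ofReal_mul (by positivity)]; rfl
    · show ENNReal.ofReal ((1/16:ℝ) ^ ((m * 5 + 2 + 2)/5)) = _
      rw [show (m * 5 + 2 + 2)/5 = m + 0 from by omega, pow_add,
        ENNReal.ofReal_mul (by positivity)]; rfl
    · show ENNReal.ofReal ((1/16:ℝ) ^ ((m * 5 + 3 + 2)/5)) = _
      rw [show (m * 5 + 3 + 2)/5 = m + 1 from by omega, pow_add,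
        ENNReal.ofReal_mul (by positivity)]; rfl
    · show ENNReal.ofReal ((1/16:ℝ) ^ ((m * 5 + 4 + 2)/5)) = _
      rw [show (m * 5 + 4 + 2)/5 = m + 1 from by omega, pow_add,
        ENNReal.ofReal_mul (by positivity)]; rfl
  rw [tsum_period _ _ key, Fin.sum_univ_five]
  simp only [Matrix.cons_val_zero, Matrix.cons_val_one, Matrix.head_cons,
    Matrix.cons_val_two, Matrix.tail_cons, Matrix.cons_val_three, Matrix.cons_val_four]
  rw [← ENNReal.ofReal_add (by positivity) (by positivity),
      ← ENNReal.ofReal_add (by positivity) (by positivity),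
      ← ENNReal.ofReal_add (by positivity) (by positivity),
      ← ENNReal.ofReal_add (by positivity) (by positivity),
      ← ENNReal.ofReal_mul (by positivity)]
  norm_num

lemma SB0 : searchTime (fun _ => 1) ![1/2, 15/16] 0 xiB = ENNReal.ofReal (38/15) := by
  unfold searchTime
  have key : ∀ (m : ℕ) (r : Fin 5),
      ENNReal.ofReal ((1 : ℝ) * (1 - (![1/2, 15/16] : Fin 2 → ℝ) 0) ^ looks xiB 0 (m * 5 + ↑r))
        = ENNReal.ofReal ((1/16 : ℝ)^m) *
          ![ENNReal.ofReal ((1/2:ℝ)^0), ENNReal.ofReal ((1/2:ℝ)^1), ENNReal.ofReal ((1/2:ℝ)^1),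
            ENNReal.ofReal ((1/2:ℝ)^2), ENNReal.ofReal ((1/2:ℝ)^3)] r := by
    intro m r
    rw [one_mul, looksB0, q0eq]
    fin_cases r
    · show ENNReal.ofReal ((1/2:ℝ) ^ (m * 5 + 0 - (m * 5 + 0 + 3)/5)) = _
      rw [show m * 5 + 0 - (m * 5 + 0 + 3)/5 = 4 * m + 0 from by omega, pow_half,
        ENNReal.ofReal_mul (by positivity)]; rfl
    · show ENNReal.ofReal ((1/2:ℝ) ^ (m * 5 + 1 - (m * 5 + 1 + 3)/5)) = _
      rw [show m * 5 + 1 - (m * 5 + 1 + 3)/5 = 4 * m + 1 from by omega, pow_half,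
        ENNReal.ofReal_mul (by positivity)]; rfl
    · show ENNReal.ofReal ((1/2:ℝ) ^ (m * 5 + 2 - (m * 5 + 2 + 3)/5)) = _
      rw [show m * 5 + 2 - (m * 5 + 2 + 3)/5 = 4 * m + 1 from by omega, pow_half,
        ENNReal.ofReal_mul (by positivity)]; rfl
    · show ENNReal.ofReal ((1/2:ℝ) ^ (m * 5 + 3 - (m * 5 + 3 + 3)/5)) = _
      rw [show m * 5 + 3 - (m * 5 + 3 + 3)/5 = 4 * m + 2 from by omega, pow_half,
        ENNReal.ofReal_mul (by positivity)]; rfl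
    · show ENNReal.ofReal ((1/2:ℝ) ^ (m * 5 + 4 - (m * 5 + 4 + 3)/5)) = _
      rw [show m * 5 + 4 - (m * 5 + 4 + 3)/5 = 4 * m + 3 from by omega, pow_half,
        ENNReal.ofReal_mul (by positivity)]; rfl
  rw [tsum_period _ _ key, Fin.sum_univ_five]
  simp only [Matrix.cons_val_zero, Matrix.cons_val_one, Matrix.head_cons,
    Matrix.cons_val_two, Matrix.tail_cons, Matrix.cons_val_three, Matrix.cons_val_four]
  rw [← ENNReal.ofReal_add (by positivity) (by positivity),
      ← ENNReal.ofReal_add (by positivity) (by positivity),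
      ← ENNReal.ofReal_add (by positivity) (by positivity),
      ← ENNReal.ofReal_add (by positivity) (by positivity),
      ← ENNReal.ofReal_mul (by positivity)]
  norm_num

lemma SB1 : searchTime (fun _ => 1) ![1/2, 15/16] 1 xiB = ENNReal.ofReal (7/3) := by
  unfold searchTime
  have key : ∀ (m : ℕ) (r : Fin 5),
      ENNReal.ofReal ((1 : ℝ) * (1 - (![1/2, 15/16] : Fin 2 → ℝ) 1) ^ looks xiB 1 (m * 5 + ↑r))
        = ENNReal.ofReal ((1/16 : ℝ)^m) *
          ![ENNReal.ofReal ((1/16:ℝ)^0), ENNReal.ofReal ((1/16:ℝ)^0), ENNReal.ofReal ((1/16:ℝ)^1),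
            ENNReal.ofReal ((1/16:ℝ)^1), ENNReal.ofReal ((1/16:ℝ)^1)] r := by
    intro m r
    rw [one_mul, looksB1, q1eq]
    fin_cases r
    · show ENNReal.ofReal ((1/16:ℝ) ^ ((m * 5 + 0 + 3)/5)) = _
      rw [show (m * 5 + 0 + 3)/5 = m + 0 from by omega, pow_add,
        ENNReal.ofReal_mul (by positivity)]; rfl
    · show ENNReal.ofReal ((1/16:ℝ) ^ ((m * 5 + 1 + 3)/5)) = _
      rw [show (m * 5 + 1 + 3)/5 = m + 0 from by omega, pow_add,
        ENNReal.ofReal_mul (by positivity)]; rfl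
    · show ENNReal.ofReal ((1/16:ℝ) ^ ((m * 5 + 2 + 3)/5)) = _
      rw [show (m * 5 + 2 + 3)/5 = m + 1 from by omega, pow_add,
        ENNReal.ofReal_mul (by positivity)]; rfl
    · show ENNReal.ofReal ((1/16:ℝ) ^ ((m * 5 + 3 + 3)/5)) = _
      rw [show (m * 5 + 3 + 3)/5 = m + 1 from by omega, pow_add,
        ENNReal.ofReal_mul (by positivity)]; rfl
    · show ENNReal.ofReal ((1/16:ℝ) ^ ((m * 5 + 4 + 3)/5)) = _
      rw [show (m * 5 + 4 + 3)/5 = m + 1 from by omega, pow_add,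
        ENNReal.ofReal_mul (by positivity)]; rfl
  rw [tsum_period _ _ key, Fin.sum_univ_five]
  simp only [Matrix.cons_val_zero, Matrix.cons_val_one, Matrix.head_cons,
    Matrix.cons_val_two, Matrix.tail_cons, Matrix.cons_val_three, Matrix.cons_val_four]
  rw [← ENNReal.ofReal_add (by positivity) (by positivity),
      ← ENNReal.ofReal_add (by positivity) (by positivity),
      ← ENNReal.ofReal_add (by positivity) (by positivity),
      ← ENNReal.ofReal_add (by positivity) (by positivity),
      ← ENNReal.ofReal_mul (by positivity)]
  norm_num

lemma key_ineq (k n1 n2 : ℕ) (h : n1 + n2 = k) :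
    (15/19 : ℝ) * (1/2)^(k - (k+2)/5) + (4/19) * (1/16)^((k+2)/5)
      ≤ (15/19) * (1/2)^n1 + (4/19) * (1/16)^n2 := by
  set g2 := (k+2)/5 with hg2
  set g1 := k - g2 with hg1
  have hsum : g1 + g2 = k := by omega
  have hb1 : 4 * g2 ≤ g1 + 2 := by omega
  have hb2 : g1 ≤ 4 * g2 + 2 := by omega
  set u : ℝ := (1/2)^g1 with hu
  set v : ℝ := (1/16)^g2 with hv
  have hu0 : 0 < u := by positivity
  have hv0 : 0 < v := by positivity
  have huv : u ≤ 4 * v := by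
    have h1 : (1/2:ℝ)^g1 * 2^g1 = 1 := by
      rw [div_pow, one_pow, div_mul_eq_mul_div, div_eq_one_iff_eq (by positivity)]; ring
    have h2 : (1/16:ℝ)^g2 * 2^(4*g2) = 1 := by
      rw [pow_mul, div_pow, one_pow]
      rw [div_mul_eq_mul_div, div_eq_one_iff_eq (by positivity)]; norm_num
    have hp : (2:ℝ)^(4*g2) ≤ 2^(g1+2) := by
      apply pow_le_pow_right₀ (by norm_num) (by omega)
    rw [pow_add] at hp
    have h2g1 : (0:ℝ) < 2^g1 := by positivity
    have h2g2 : (0:ℝ) < 2^(4*g2) := by positivity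
    rw [hu, hv] at *
    nlinarith [mul_pos h2g1 h2g2]
  have hvu : v ≤ 4 * u := by
    have h1 : (1/2:ℝ)^g1 * 2^g1 = 1 := by
      rw [div_pow, one_pow, div_mul_eq_mul_div, div_eq_one_iff_eq (by positivity)]; ring
    have h2 : (1/16:ℝ)^g2 * 2^(4*g2) = 1 := by
      rw [pow_mul, div_pow, one_pow]
      rw [div_mul_eq_mul_div, div_eq_one_iff_eq (by positivity)]; norm_num
    have hp : (2:ℝ)^g1 ≤ 2^(4*g2+2) := by
      apply pow_le_pow_right₀ (by norm_num) (by omega)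
    rw [pow_add] at hp
    have h2g1 : (0:ℝ) < 2^g1 := by positivity
    have h2g2 : (0:ℝ) < 2^(4*g2) := by positivity
    rw [hu, hv] at *
    nlinarith [mul_pos h2g1 h2g2]
  rcases le_or_gt n2 g2 with hc | hc
  · set d := g2 - n2 with hd
    have hn1 : n1 = g1 + d := by omega
    have hn2 : g2 = n2 + d := by omega
    rcases Nat.eq_zero_or_pos d with h0 | hdpos
    · have h1 : n2 = g2 := by omega
      subst h1; rw [show n1 = g1 from by omega]
    · have e1 : (1/2:ℝ)^n1 = u * (1/2)^d := by rw [hn1, pow_add]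
      have e2 : (1/16:ℝ)^n2 * (1/16)^d = v := by rw [hv, hn2, pow_add]
      have hw : (0:ℝ) < (1/16)^d := by positivity
      have e2' : (1/16:ℝ)^n2 = v * ((1/16)^d)⁻¹ := by
        field_simp at e2 ⊢; linarith [e2]
      rw [e1, e2']
      have hd16 : (16:ℝ) ≤ ((1/16:ℝ)^d)⁻¹ := by
        rw [show ((1/16:ℝ)^d)⁻¹ = 16^d from by rw [← inv_pow]; norm_num]
        calc (16:ℝ) = 16^1 := by norm_num
        _ ≤ 16^d := pow_le_pow_right₀ (by norm_num) hdpos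
      have hhalf : (1/2:ℝ)^d ≤ 1 := pow_le_one₀ (by norm_num) (by norm_num)
      have hhalf0 : (0:ℝ) < (1/2)^d := by positivity
      nlinarith [mul_le_mul_of_nonneg_left hd16 (le_of_lt hv0),
        mul_le_mul_of_nonneg_left hhalf (le_of_lt hu0)]
  · set e := n2 - g2 with he
    have hepos : 1 ≤ e := by omega
    have hn1 : g1 = n1 + e := by omega
    have e1 : (1/2:ℝ)^n1 * (1/2)^e = u := by rw [hu, hn1, pow_add]
    have e2 : (1/16:ℝ)^n2 = v * (1/16)^e := by rw [hv, show n2 = g2 + e from by omega, pow_add]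
    have hw : (0:ℝ) < (1/2)^e := by positivity
    have e1' : (1/2:ℝ)^n1 = u * ((1/2)^e)⁻¹ := by
      field_simp at e1 ⊢; linarith [e1]
    rw [e1', e2]
    rcases eq_or_lt_of_le hepos with h1 | h2
    · rw [← h1] at *
      have h3 : ((1/2:ℝ)^1)⁻¹ = 2 := by norm_num
      rw [h3]
      nlinarith
    · have hz : (4:ℝ) ≤ ((1/2:ℝ)^e)⁻¹ := by
        rw [show ((1/2:ℝ)^e)⁻¹ = 2^e from by rw [← inv_pow]; norm_num]
        calc (4:ℝ) = 2^2 := by norm_num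
        _ ≤ 2^e := pow_le_pow_right₀ (by norm_num) h2
      have h16 : (0:ℝ) < (1/16)^e := by positivity
      nlinarith [mul_le_mul_of_nonneg_left hz (le_of_lt hu0)]

lemma mixed_two (p : Fin 2 → ℝ) (ξ : ℕ → Fin 2) :
    mixedSearchTime (fun _ => 1) ![1/2, 15/16] p ξ
      = ENNReal.ofReal (p 0) * searchTime (fun _ => 1) ![1/2, 15/16] 0 ξ
        + ENNReal.ofReal (p 1) * searchTime (fun _ => 1) ![1/2, 15/16] 1 ξ := by
  simp [mixedSearchTime, Fin.sum_univ_two]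

/-- lower bound: the greedy sequence `xiA` is optimal against `p'`. -/
lemma greedy_opt (ξ : ℕ → Fin 2) :
    mixedSearchTime (fun _ => 1) ![1/2, 15/16] ![15/19, 4/19] xiA
      ≤ mixedSearchTime (fun _ => 1) ![1/2, 15/16] ![15/19, 4/19] ξ := by
  rw [mixed_two, mixed_two]
  unfold searchTime
  rw [← ENNReal.tsum_mul_left, ← ENNReal.tsum_mul_left, ← ENNReal.tsum_mul_left,
    ← ENNReal.tsum_mul_left, ← ENNReal.tsum_add, ← ENNReal.tsum_add]
  apply ENNReal.tsum_le_tsum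
  intro k
  have hp0 : (![15/19, 4/19] : Fin 2 → ℝ) 0 = 15/19 := rfl
  have hp1 : (![15/19, 4/19] : Fin 2 → ℝ) 1 = 4/19 := rfl
  rw [hp0, hp1]
  simp only [one_mul, q0eq, q1eq]
  rw [← ENNReal.ofReal_mul (by norm_num), ← ENNReal.ofReal_mul (by norm_num),
    ← ENNReal.ofReal_mul (by norm_num), ← ENNReal.ofReal_mul (by norm_num),
    ← ENNReal.ofReal_add (by positivity) (by positivity),
    ← ENNReal.ofReal_add (by positivity) (by positivity)]
  apply ENNReal.ofReal_le_ofReal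
  rw [looksA0, looksA1]
  exact key_ineq k (looks ξ 0 k) (looks ξ 1 k) (looks_add ξ k)

/-- for two boxes with unit search times, `q_1 = 1/2` and `q_2 = 15/16`,
the Hider strategy `p' = (15/19, 4/19)` is an optimal (max-min) Hider strategy:
`inf_ξ u(p',ξ) = sup_p inf_ξ u(p,ξ)`, the supremum being over all mixed Hider
strategies. -/
theorem example_optimal_hider_strategy :
    (⨅ ξ : ℕ → Fin 2,
        mixedSearchTime (fun _ => 1) ![1 / 2, 15 / 16] ![15 / 19, 4 / 19] ξ) =
      ⨆ (p : Fin 2 → ℝ) (_ : (∀ j, 0 ≤ p j) ∧ ∑ j, p j = 1),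
        ⨅ ξ : ℕ → Fin 2, mixedSearchTime (fun _ => 1) ![1 / 2, 15 / 16] p ξ := by
  have hp' : (∀ j : Fin 2, 0 ≤ (![15/19, 4/19] : Fin 2 → ℝ) j)
      ∧ ∑ j, (![15/19, 4/19] : Fin 2 → ℝ) j = 1 := by
    constructor
    · intro j; fin_cases j <;> norm_num
    · rw [Fin.sum_univ_two]; norm_num
  have hval : (⨅ ξ : ℕ → Fin 2,
      mixedSearchTime (fun _ => 1) ![1/2, 15/16] ![15/19, 4/19] ξ)
      = ENNReal.ofReal (142/57) := by
    have h1 : (⨅ ξ : ℕ → Fin 2,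
        mixedSearchTime (fun _ => 1) ![1/2, 15/16] ![15/19, 4/19] ξ)
        = mixedSearchTime (fun _ => 1) ![1/2, 15/16] ![15/19, 4/19] xiA :=
      le_antisymm (iInf_le _ xiA) (le_iInf greedy_opt)
    rw [h1, mixed_two, SA0, SA1]
    rw [show ((![15/19, 4/19] : Fin 2 → ℝ) 0) = 15/19 from rfl,
      show ((![15/19, 4/19] : Fin 2 → ℝ) 1) = 4/19 from rfl,
      ← ENNReal.ofReal_mul (by norm_num), ← ENNReal.ofReal_mul (by norm_num),
      ← ENNReal.ofReal_add (by positivity) (by positivity)]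
    norm_num
  apply le_antisymm
  · exact le_iSup₂ (f := fun (p : Fin 2 → ℝ) (_ : (∀ j, 0 ≤ p j) ∧ ∑ j, p j = 1) =>
      ⨅ ξ : ℕ → Fin 2, mixedSearchTime (fun _ => 1) ![1/2, 15/16] p ξ) ![15/19, 4/19] hp'
  · apply iSup₂_le
    intro p hp
    obtain ⟨hnn, hs⟩ := hp
    rw [Fin.sum_univ_two] at hs
    rw [hval]
    rcases le_or_gt (15/19 : ℝ) (p 0) with hc | hc
    · refine (iInf_le _ xiA).trans ?_
      rw [mixed_two, SA0, SA1,
        ← ENNReal.ofReal_mul (hnn 0), ← ENNReal.ofReal_mul (hnn 1),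
        ← ENNReal.ofReal_add (mul_nonneg (hnn 0) (by norm_num))
          (mul_nonneg (hnn 1) (by norm_num))]
      apply ENNReal.ofReal_le_ofReal
      nlinarith [hnn 0, hnn 1]
    · refine (iInf_le _ xiB).trans ?_
      rw [mixed_two, SB0, SB1,
        ← ENNReal.ofReal_mul (hnn 0), ← ENNReal.ofReal_mul (hnn 1),
        ← ENNReal.ofReal_add (mul_nonneg (hnn 0) (by norm_num))
          (mul_nonneg (hnn 1) (by norm_num))]
      apply ENNReal.ofReal_le_ofReal
      nlinarith [hnn 0, hnn 1]
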